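/- Let Y, Z be independent Gamma random variables with shapes m₁, m₂ ∈ ℕ₊ and rates c₁, a₁ > 0 respectively, and let X be an independent Gamma random variable with integer shape m ≥ 1 and rate λ > 0. Then for constants b₁ ≥ 0, b₂, b₃ > 0, P(X < b₂/λ · Y + b₃/λ · Z + b₁/λ) = 1 - ∑_{k=0}^{m-1} ∑_{l=0}^{k} ∑_{p=0}^{l} C(k,l) C(l,p) · e^{-b₁} b₁^{l-p} b₂^{k-l} b₃^{p} · (a₁^{m₂} Γ(m₂+p) / (Γ(m₂) (a₁+b₃)^{m₂+p})) · (c₁^{m₁} Γ(m₁+k-l) / (Γ(m₁) (b₂+c₁)^{m₁+k-l})) / k!. -/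

import Mathlib

open MeasureTheory ProbabilityTheory Real

open Set
open scoped ENNReal NNReal

namespace OutageAux


lemma gammaMeasure_Iio_zero (a r : ℝ) : gammaMeasure a r (Iio 0) = 0 := by
  rw [gammaMeasure, withDensity_apply _ measurableSet_Iio]
  exact lintegral_gammaPDF_of_nonpos le_rfl

lemma ae_nonneg_gamma (a r : ℝ) : ∀ᵐ x ∂(gammaMeasure a r), 0 ≤ x := by
  rw [Filter.eventually_iff, mem_ae_iff]
  have h : {x : ℝ | 0 ≤ x}ᶜ = Iio 0 := by ext x; simp [not_le]
  rw [h]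
  exact gammaMeasure_Iio_zero a r

lemma integral_gammaMeasure (a r : ℝ) (ha : 0 < a) (hr : 0 < r) (g : ℝ → ℝ) :
    ∫ x, g x ∂(gammaMeasure a r) = ∫ x, gammaPDFReal a r x * g x := by
  rw [gammaMeasure,
    show gammaPDF a r = fun x => ((Real.toNNReal (gammaPDFReal a r x) : ℝ≥0) : ℝ≥0∞) from rfl,
    integral_withDensity_eq_integral_smul (measurable_gammaPDFReal a r).real_toNNReal g]
  congr 1
  ext x
  rw [NNReal.smul_def, Real.coe_toNNReal _ (gammaPDFReal_nonneg ha hr x), smul_eq_mul]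

lemma integrableOn_rpow_exp {t c : ℝ} (ht : 0 < t) (hc : 0 < c) :
    IntegrableOn (fun y : ℝ => y ^ (t - 1) * exp (-(c * y))) (Ioi 0) := by
  have h0 : IntegrableOn (fun u : ℝ => exp (-u) * u ^ (t - 1)) (Ioi 0) :=
    Real.GammaIntegral_convergent ht
  have h1 : IntegrableOn (fun y : ℝ => exp (-(c * y)) * (c * y) ^ (t - 1)) (Ioi 0) := by
    have := (integrableOn_Ioi_comp_mul_left_iff
      (fun u : ℝ => exp (-u) * u ^ (t - 1)) 0 hc).2
    simpa using this (by simpa using h0)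
  have h2 : IntegrableOn
      (fun y : ℝ => (1 / c) ^ (t - 1) * (exp (-(c * y)) * (c * y) ^ (t - 1))) (Ioi 0) :=
    h1.const_mul ((1 / c) ^ (t - 1))
  refine IntegrableOn.congr_fun h2 (fun y hy => ?_) measurableSet_Ioi
  have hy' : (0:ℝ) < y := hy
  have hcp : (0:ℝ) < c ^ (t - 1) := rpow_pos_of_pos hc _
  rw [mul_rpow hc.le hy'.le, one_div, inv_rpow hc.le]
  field_simp


-- pointwise identity

lemma pdf_mul_eq (n₀ j : ℕ) (hn₀ : 1 ≤ n₀) (r s : ℝ) (hr : 0 < r) {y : ℝ} (hy : 0 < y) :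
    gammaPDFReal (n₀ : ℝ) r y * (y ^ j * exp (-(s * y)))
      = r ^ n₀ / Gamma (n₀ : ℝ) * (y ^ (((n₀ : ℝ) + j) - 1) * exp (-((s + r) * y))) := by
  rw [gammaPDFReal, if_pos hy.le]
  have h1 : (r : ℝ) ^ (n₀ : ℝ) = r ^ n₀ := rpow_natCast r n₀
  have h2 : y ^ ((n₀ : ℝ) - 1) * y ^ j = y ^ (((n₀ : ℝ) + j) - 1) := by
    rw [← rpow_natCast y j, ← rpow_add hy]
    ring_nf
  have h3 : exp (-(r * y)) * exp (-(s * y)) = exp (-((s + r) * y)) := by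
    rw [← exp_add]; ring_nf
  calc r ^ (n₀ : ℝ) / Gamma (n₀:ℝ) * y ^ ((n₀:ℝ) - 1) * exp (-(r * y)) * (y ^ j * exp (-(s * y)))
      = r ^ (n₀ : ℝ) / Gamma (n₀:ℝ) * ((y ^ ((n₀:ℝ) - 1) * y ^ j) * (exp (-(r * y)) * exp (-(s * y)))) := by ring
    _ = _ := by rw [h1, h2, h3]

lemma support_pdf_mul (n₀ j : ℕ) (r s : ℝ) :
    Function.support (fun y : ℝ => gammaPDFReal (n₀ : ℝ) r y * (y ^ j * exp (-(s * y)))) ⊆ Ici 0 := by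
  intro y hy
  by_contra h
  rw [mem_Ici, not_le] at h
  apply hy
  simp [gammaPDFReal, not_le.mpr h]

lemma integrable_pow_exp_gamma (n₀ j : ℕ) (hn₀ : 1 ≤ n₀) {r s : ℝ} (hr : 0 < r) (hs : 0 ≤ s) :
    Integrable (fun y : ℝ => y ^ j * exp (-(s * y))) (gammaMeasure (n₀ : ℝ) r) := by
  rw [gammaMeasure,
    show gammaPDF (n₀:ℝ) r = fun x => ((Real.toNNReal (gammaPDFReal (n₀:ℝ) r x) : ℝ≥0) : ℝ≥0∞) from rfl,
    integrable_withDensity_iff_integrable_smul (measurable_gammaPDFReal (n₀:ℝ) r).real_toNNReal]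
  have hnn : ∀ x : ℝ, (Real.toNNReal (gammaPDFReal (n₀:ℝ) r x) : ℝ) = gammaPDFReal (n₀:ℝ) r x :=
    fun x => Real.coe_toNNReal _ (gammaPDFReal_nonneg (by positivity) hr x)
  simp_rw [NNReal.smul_def, hnn, smul_eq_mul]
  rw [← integrableOn_iff_integrable_of_support_subset (support_pdf_mul n₀ j r s),
    IntegrableOn, Measure.restrict_congr_set Ioi_ae_eq_Ici.symm]
  have hbase := (integrableOn_rpow_exp (t := (n₀:ℝ) + j) (c := s + r) (by positivity) (by positivity)).const_mul (r ^ n₀ / Gamma (n₀:ℝ))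
  refine IntegrableOn.congr_fun hbase (fun y hy => ?_) measurableSet_Ioi
  exact (pdf_mul_eq n₀ j hn₀ r s hr hy).symm

lemma moment_gamma (n₀ j : ℕ) (hn₀ : 1 ≤ n₀) {r s : ℝ} (hr : 0 < r) (hs : 0 ≤ s) :
    ∫ y, y ^ j * exp (-(s * y)) ∂(gammaMeasure (n₀ : ℝ) r)
      = r ^ n₀ * Gamma ((n₀ : ℝ) + j) / (Gamma (n₀ : ℝ) * (s + r) ^ (n₀ + j)) := by
  have hn₀' : (0:ℝ) < (n₀:ℝ) := by positivity
  rw [integral_gammaMeasure _ _ hn₀' hr]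
  rw [← setIntegral_eq_integral_of_forall_compl_eq_zero
    (s := Ici 0) (fun x hx => ?_)]
  · rw [integral_Ici_eq_integral_Ioi,
      setIntegral_congr_fun measurableSet_Ioi
        (fun y hy => pdf_mul_eq n₀ j hn₀ r s hr hy),
      integral_const_mul,
      integral_rpow_mul_exp_neg_mul_Ioi (by positivity : (0:ℝ) < (n₀:ℝ) + j) (by positivity : (0:ℝ) < s + r)]
    have h4 : ((1:ℝ) / (s + r)) ^ ((n₀:ℝ) + (j:ℝ)) = 1 / (s + r) ^ (n₀ + j) := by
      rw [show ((n₀:ℝ) + (j:ℝ)) = ((n₀ + j : ℕ) : ℝ) by push_cast; ring,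
        rpow_natCast, div_pow, one_pow]
    rw [h4]
    field_simp
  · have : x < 0 := by simpa [not_le] using hx
    simp [gammaPDFReal, not_le.mpr this]



lemma sum_deriv_aux (n : ℕ) (u : ℝ) :
    ∑ k ∈ Finset.range (n + 1), (k : ℝ) * u ^ (k - 1) / (Nat.factorial k)
      = ∑ k ∈ Finset.range n, u ^ k / (Nat.factorial k) := by
  rw [Finset.sum_range_succ']
  simp only [Nat.cast_zero, zero_mul, Nat.factorial_zero, Nat.cast_one, zero_div, add_zero]
  refine Finset.sum_congr rfl (fun i _ => ?_)
  have h : (Nat.factorial (i + 1) : ℝ) = (i + 1) * Nat.factorial i := by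
    rw [Nat.factorial_succ]; push_cast; ring
  rw [h]
  have hi : (0:ℝ) < (i:ℝ) + 1 := by positivity
  have hf : (0:ℝ) < (Nat.factorial i : ℝ) := by positivity
  field_simp
  push_cast
  ring

lemma hasDerivAt_F (n : ℕ) (lam t : ℝ) :
    HasDerivAt (fun t : ℝ => 1 - exp (-(lam * t)) * ∑ k ∈ Finset.range (n + 1),
        (lam * t) ^ k / (Nat.factorial k))
      (lam ^ (n + 1) / (Nat.factorial n) * t ^ n * exp (-(lam * t))) t := by
  have hid : HasDerivAt (fun t : ℝ => lam * t) lam t := by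
    simpa using (hasDerivAt_id t).const_mul lam
  have hE : HasDerivAt (fun t : ℝ => exp (-(lam * t))) (exp (-(lam * t)) * (-lam)) t := by
    simpa using hid.neg.exp
  have hS : HasDerivAt (fun t : ℝ => ∑ k ∈ Finset.range (n + 1), (lam * t) ^ k / (Nat.factorial k))
      (∑ k ∈ Finset.range (n + 1), (k : ℝ) * (lam * t) ^ (k - 1) * lam / (Nat.factorial k)) t := by
    refine HasDerivAt.fun_sum (fun k _ => ?_)
    simpa using (hid.pow k).div_const (Nat.factorial k : ℝ)
  have h : HasDerivAt (fun t : ℝ => 1 - exp (-(lam * t)) * ∑ k ∈ Finset.range (n + 1),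
      (lam * t) ^ k / (Nat.factorial k)) _ t := ((hE.fun_mul hS).const_sub 1)
  convert h using 1
  have hD : (∑ k ∈ Finset.range (n + 1), (k : ℝ) * (lam * t) ^ (k - 1) * lam / (Nat.factorial k))
      = lam * ∑ k ∈ Finset.range n, (lam * t) ^ k / (Nat.factorial k) := by
    rw [← sum_deriv_aux n (lam * t), Finset.mul_sum]
    exact Finset.sum_congr rfl (fun k _ => by ring)
  rw [hD, Finset.sum_range_succ]
  have : lam * (lam * t) ^ n = lam ^ (n+1) * t ^ n := by rw [mul_pow]; ring
  field_simp
  ring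


lemma gamma_cdf (n : ℕ) {lam : ℝ} (hlam : 0 < lam) {t : ℝ} (ht : 0 ≤ t) :
    gammaMeasure (((n + 1 : ℕ)) : ℝ) lam {x : ℝ | x < t}
      = ENNReal.ofReal (1 - exp (-(lam * t)) * ∑ k ∈ Finset.range (n + 1),
          (lam * t) ^ k / (Nat.factorial k)) := by
  have hset : {x : ℝ | x < t} = Iio t := rfl
  rw [hset, gammaMeasure, withDensity_apply _ measurableSet_Iio,
    Measure.restrict_congr_set Iio_ae_eq_Iic,
    lintegral_Iic_eq_lintegral_Iio_add_Icc _ ht, lintegral_gammaPDF_of_nonpos le_rfl, zero_add]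
  set g : ℝ → ℝ := fun x => lam ^ (n + 1) / (Nat.factorial n) * x ^ n * exp (-(lam * x)) with hg
  have hcongr : ∫⁻ x in Icc 0 t, gammaPDF ((n + 1 : ℕ) : ℝ) lam x
      = ∫⁻ x in Icc 0 t, ENNReal.ofReal (g x) := by
    refine setLIntegral_congr_fun measurableSet_Icc (fun x hx => ?_)
    rw [gammaPDF_of_nonneg hx.1]
    congr 1
    have h1 : (lam : ℝ) ^ (((n + 1 : ℕ)) : ℝ) = lam ^ (n + 1) := by
      rw [rpow_natCast]
    have h2 : Gamma (((n + 1 : ℕ)) : ℝ) = (Nat.factorial n : ℝ) := by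
      push_cast
      exact Gamma_nat_eq_factorial n
    have h3 : x ^ ((((n + 1 : ℕ)) : ℝ) - 1) = x ^ n := by
      rw [show (((n + 1 : ℕ)) : ℝ) - 1 = ((n : ℕ) : ℝ) by push_cast; ring, rpow_natCast]
    rw [h1, h2, h3, hg]
  rw [hcongr]
  have hgcont : Continuous g := by fun_prop
  have hint : IntegrableOn g (Icc 0 t) := hgcont.integrableOn_Icc
  have hnn : 0 ≤ᵐ[volume.restrict (Icc 0 t)] g := by
    refine (ae_restrict_iff' measurableSet_Icc).2 (ae_of_all _ (fun x hx => ?_))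
    have hx0 : 0 ≤ x := hx.1
    rw [hg]
    positivity
  rw [← ofReal_integral_eq_lintegral_ofReal hint hnn]
  congr 1
  rw [integral_Icc_eq_integral_Ioc, ← intervalIntegral.integral_of_le ht,
    intervalIntegral.integral_eq_sub_of_hasDerivAt
      (fun x _ => hasDerivAt_F n lam x) ((by fun_prop : Continuous fun x : ℝ =>
        lam ^ (n + 1) / (Nat.factorial n) * x ^ n * exp (-(lam * x))).intervalIntegrable 0 t)]
  have h0 : (1 : ℝ) - exp (-(lam * 0)) * ∑ k ∈ Finset.range (n + 1),
      (lam * 0) ^ k / (Nat.factorial k) = 0 := by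
    norm_num [Finset.sum_range_succ', mul_zero]
  rw [h0, sub_zero]



lemma expand (k : ℕ) (b₁ b₂ b₃ y z : ℝ) :
    exp (-(b₂ * y + b₃ * z + b₁)) * (b₂ * y + b₃ * z + b₁) ^ k / (Nat.factorial k)
      = ∑ l ∈ Finset.range (k + 1), ∑ p ∈ Finset.range (l + 1),
          ((k.choose l : ℝ) * (l.choose p : ℝ) * exp (-b₁) * b₁ ^ (l - p) * b₂ ^ (k - l)
              * b₃ ^ p / (Nat.factorial k))
            * ((y ^ (k - l) * exp (-(b₂ * y))) * (z ^ p * exp (-(b₃ * z)))) := by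
  have hA : b₂ * y + b₃ * z + b₁ = (b₃ * z + b₁) + b₂ * y := by ring
  rw [hA, add_pow, Finset.mul_sum, Finset.sum_div]
  refine Finset.sum_congr rfl (fun l hl => ?_)
  rw [add_pow]
  rw [Finset.sum_mul, Finset.sum_mul, Finset.mul_sum, Finset.sum_div]
  refine Finset.sum_congr rfl (fun p hp => ?_)
  rw [show -((b₃ * z + b₁) + b₂ * y) = -(b₂ * y) + (-(b₃ * z) + -b₁) by ring,
    exp_add, exp_add, mul_pow b₃ z, mul_pow b₂ y]
  ring

end OutageAux

open OutageAux

/-- Closed-form outage probability (Theorem 1, common stream): for independent Gamma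
random variables `X ~ Gamma(m, λ)`, `Y ~ Gamma(m₁, c₁)`, `Z ~ Gamma(m₂, a₁)`
(independence encoded by the product measure), and constants `b₁ ≥ 0`, `b₂, b₃ > 0`,
`P(X < b₂/λ·Y + b₃/λ·Z + b₁/λ)` equals the triple-sum closed form. -/
theorem outage_closed_form
    (m m₁ m₂ : ℕ) (hm : 1 ≤ m) (hm₁ : 1 ≤ m₁) (hm₂ : 1 ≤ m₂)
    (lam c₁ a₁ : ℝ) (hlam : 0 < lam) (hc₁ : 0 < c₁) (ha₁ : 0 < a₁)
    (b₁ b₂ b₃ : ℝ) (hb₁ : 0 ≤ b₁) (hb₂ : 0 < b₂) (hb₃ : 0 < b₃) :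
    (((gammaMeasure (m : ℝ) lam).prod
        ((gammaMeasure (m₁ : ℝ) c₁).prod (gammaMeasure (m₂ : ℝ) a₁)))
      {q : ℝ × ℝ × ℝ | q.1 < b₂ / lam * q.2.1 + b₃ / lam * q.2.2 + b₁ / lam}).toReal
    = 1 - ∑ k ∈ Finset.range m, ∑ l ∈ Finset.range (k + 1), ∑ p ∈ Finset.range (l + 1),
        (Nat.choose k l : ℝ) * (Nat.choose l p : ℝ)
          * Real.exp (-b₁) * b₁ ^ (l - p) * b₂ ^ (k - l) * b₃ ^ p
          * (a₁ ^ m₂ * Real.Gamma ((m₂ : ℝ) + p)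
              / (Real.Gamma m₂ * (a₁ + b₃) ^ (m₂ + p)))
          * (c₁ ^ m₁ * Real.Gamma ((m₁ : ℝ) + (k - l : ℕ))
              / (Real.Gamma m₁ * (b₂ + c₁) ^ (m₁ + (k - l))))
          / (Nat.factorial k) := by
  obtain ⟨n, rfl⟩ : ∃ n, m = n + 1 := ⟨m - 1, (Nat.succ_pred_eq_of_pos hm).symm⟩
  have hm₁' : (0:ℝ) < (m₁ : ℝ) := by exact_mod_cast Nat.pos_of_ne_zero (by omega)
  have hm₂' : (0:ℝ) < (m₂ : ℝ) := by exact_mod_cast Nat.pos_of_ne_zero (by omega)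
  set μ₁ := gammaMeasure (m₁ : ℝ) c₁ with hμ₁
  set μ₂ := gammaMeasure (m₂ : ℝ) a₁ with hμ₂
  set ν := μ₁.prod μ₂ with hν
  haveI i1 : IsProbabilityMeasure μ₁ := isProbabilityMeasure_gammaMeasure hm₁' hc₁
  haveI i2 : IsProbabilityMeasure μ₂ := isProbabilityMeasure_gammaMeasure hm₂' ha₁
  haveI iν : IsProbabilityMeasure ν := by infer_instance
  haveI i0 : IsProbabilityMeasure (gammaMeasure (((n + 1 : ℕ)) : ℝ) lam) :=
    isProbabilityMeasure_gammaMeasure (by positivity) hlam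
  have hS : MeasurableSet {q : ℝ × ℝ × ℝ |
      q.1 < b₂ / lam * q.2.1 + b₃ / lam * q.2.2 + b₁ / lam} := by
    apply measurableSet_lt measurable_fst
    fun_prop
  rw [show ((n + 1 : ℕ) : ℝ) = (((n + 1 : ℕ)) : ℝ) from rfl]
  rw [Measure.prod_apply_symm hS]
  -- a.e. nonnegativity on ν
  have hae : ∀ᵐ w ∂ν, 0 ≤ w.1 ∧ 0 ≤ w.2 := by
    have h1 : ν ((Iio 0) ×ˢ (univ : Set ℝ)) = 0 := by
      rw [hν, Measure.prod_prod, gammaMeasure_Iio_zero]; simp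
    have h2 : ν ((univ : Set ℝ) ×ˢ (Iio 0)) = 0 := by
      rw [hν, Measure.prod_prod, gammaMeasure_Iio_zero]; simp
    rw [Filter.eventually_iff, mem_ae_iff]
    refine measure_mono_null (fun w hw => ?_) (measure_union_null h1 h2)
    simp only [mem_compl_iff, mem_setOf_eq, not_and_or, not_le] at hw
    rcases hw with hw | hw
    · exact Or.inl ⟨hw, mem_univ _⟩
    · exact Or.inr ⟨mem_univ _, hw⟩
  set G : ℝ × ℝ → ℝ := fun w =>
    exp (-(b₂ * w.1 + b₃ * w.2 + b₁)) * ∑ k ∈ Finset.range (n + 1),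
      (b₂ * w.1 + b₃ * w.2 + b₁) ^ k / (Nat.factorial k) with hG
  have key : ∀ᵐ w ∂ν, gammaMeasure (((n + 1 : ℕ)) : ℝ) lam
      ((fun x => (x, w)) ⁻¹' {q : ℝ × ℝ × ℝ |
        q.1 < b₂ / lam * q.2.1 + b₃ / lam * q.2.2 + b₁ / lam})
      = ENNReal.ofReal (1 - G w) := by
    filter_upwards [hae] with w hw
    have hpre : (fun x => (x, w)) ⁻¹' {q : ℝ × ℝ × ℝ |
        q.1 < b₂ / lam * q.2.1 + b₃ / lam * q.2.2 + b₁ / lam}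
        = {x : ℝ | x < b₂ / lam * w.1 + b₃ / lam * w.2 + b₁ / lam} := rfl
    have hT : 0 ≤ b₂ / lam * w.1 + b₃ / lam * w.2 + b₁ / lam := by
      have := hw.1; have := hw.2
      have h1 : 0 ≤ b₂ / lam * w.1 := mul_nonneg (by positivity) hw.1
      have h2 : 0 ≤ b₃ / lam * w.2 := mul_nonneg (by positivity) hw.2
      positivity
    rw [hpre, gamma_cdf n hlam hT]
    have hlT : lam * (b₂ / lam * w.1 + b₃ / lam * w.2 + b₁ / lam)
        = b₂ * w.1 + b₃ * w.2 + b₁ := by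
      field_simp
    rw [hlT, hG]
  rw [lintegral_congr_ae key]
  have hG01 : ∀ᵐ w ∂ν, 0 ≤ G w ∧ G w ≤ 1 := by
    filter_upwards [hae] with w hw
    have hu : 0 ≤ b₂ * w.1 + b₃ * w.2 + b₁ := by
      have h1 : 0 ≤ b₂ * w.1 := mul_nonneg hb₂.le hw.1
      have h2 : 0 ≤ b₃ * w.2 := mul_nonneg hb₃.le hw.2
      positivity
    constructor
    · exact mul_nonneg (exp_pos _).le (Finset.sum_nonneg fun k _ =>
        div_nonneg (pow_nonneg hu _) (by positivity))
    · calc G w ≤ exp (-(b₂ * w.1 + b₃ * w.2 + b₁)) * exp (b₂ * w.1 + b₃ * w.2 + b₁) :=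
          mul_le_mul_of_nonneg_left (Real.sum_le_exp_of_nonneg hu _) (exp_pos _).le
        _ = 1 := by rw [← exp_add, neg_add_cancel, exp_zero]
  have hGmeas : Measurable G := by
    apply Measurable.mul
    · fun_prop
    · fun_prop
  have step1 : ∫⁻ w, ENNReal.ofReal (1 - G w) ∂ν
      = 1 - ∫⁻ w, ENNReal.ofReal (G w) ∂ν := by
    have hcongr : ∫⁻ w, ENNReal.ofReal (1 - G w) ∂ν
        = ∫⁻ w, (1 - ENNReal.ofReal (G w)) ∂ν := by
      refine lintegral_congr_ae ?_
      filter_upwards [hG01] with w hw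
      rw [ENNReal.ofReal_sub 1 hw.1, ENNReal.ofReal_one]
    have hle1 : (fun w => ENNReal.ofReal (G w)) ≤ᵐ[ν] fun _ => (1 : ℝ≥0∞) := by
      filter_upwards [hG01] with w hw
      simpa [ENNReal.ofReal_le_one] using hw.2
    have hfin : ∫⁻ w, ENNReal.ofReal (G w) ∂ν ≠ ∞ := by
      refine ne_of_lt (lt_of_le_of_lt (lintegral_mono_ae hle1) ?_)
      simp [lintegral_one, measure_univ]
    rw [hcongr, lintegral_sub (g := fun w => ENNReal.ofReal (G w)) hGmeas.ennreal_ofReal hfin hle1]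
    simp [lintegral_one, measure_univ]
  rw [step1]
  have hle : ∫⁻ w, ENNReal.ofReal (G w) ∂ν ≤ 1 := by
    calc ∫⁻ w, ENNReal.ofReal (G w) ∂ν ≤ ∫⁻ _, (1:ℝ≥0∞) ∂ν := by
          refine lintegral_mono_ae ?_
          filter_upwards [hG01] with w hw
          simpa [ENNReal.ofReal_le_one] using hw.2
      _ = 1 := by simp [lintegral_one, measure_univ]
  rw [ENNReal.toReal_sub_of_le hle (by simp), ENNReal.toReal_one]
  congr 1
  have hGint : (∫⁻ w, ENNReal.ofReal (G w) ∂ν).toReal = ∫ w, G w ∂ν := by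
    rw [integral_eq_lintegral_of_nonneg_ae (hG01.mono fun w hw => hw.1)
      hGmeas.aestronglyMeasurable]
  rw [hGint]
  -- now compute the integral
  have hGexp : ∀ w : ℝ × ℝ, G w = ∑ k ∈ Finset.range (n + 1), ∑ l ∈ Finset.range (k + 1),
      ∑ p ∈ Finset.range (l + 1),
        ((k.choose l : ℝ) * (l.choose p : ℝ) * exp (-b₁) * b₁ ^ (l - p) * b₂ ^ (k - l)
            * b₃ ^ p / (Nat.factorial k))
          * ((w.1 ^ (k - l) * exp (-(b₂ * w.1))) * (w.2 ^ p * exp (-(b₃ * w.2)))) := by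
    intro w
    rw [hG]
    simp only [Finset.mul_sum]
    refine Finset.sum_congr rfl (fun k _ => ?_)
    rw [← expand k b₁ b₂ b₃ w.1 w.2]
    ring
  simp_rw [hGexp]
  have hint : ∀ k l p : ℕ, Integrable (fun w : ℝ × ℝ =>
      ((k.choose l : ℝ) * (l.choose p : ℝ) * exp (-b₁) * b₁ ^ (l - p) * b₂ ^ (k - l)
          * b₃ ^ p / (Nat.factorial k))
        * ((w.1 ^ (k - l) * exp (-(b₂ * w.1))) * (w.2 ^ p * exp (-(b₃ * w.2))))) ν := by
    intro k l p
    exact ((integrable_pow_exp_gamma m₁ (k - l) hm₁ hc₁ hb₂.le).mul_prod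
      (integrable_pow_exp_gamma m₂ p hm₂ ha₁ hb₃.le)).const_mul _
  rw [integral_finset_sum _ (fun k _ => integrable_finset_sum _ (fun l _ =>
    integrable_finset_sum _ (fun p _ => hint k l p)))]
  refine Finset.sum_congr rfl (fun k _ => ?_)
  rw [integral_finset_sum _ (fun l _ => integrable_finset_sum _ (fun p _ => hint k l p))]
  refine Finset.sum_congr rfl (fun l _ => ?_)
  rw [integral_finset_sum _ (fun p _ => hint k l p)]
  refine Finset.sum_congr rfl (fun p _ => ?_)
  rw [integral_const_mul, hν,
    integral_prod_mul (f := fun y : ℝ => y ^ (k - l) * exp (-(b₂ * y)))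
      (g := fun z : ℝ => z ^ p * exp (-(b₃ * z))), hμ₁, hμ₂,
    moment_gamma m₁ (k - l) hm₁ hc₁ hb₂.le, moment_gamma m₂ p hm₂ ha₁ hb₃.le,
    add_comm b₃ a₁]
  ring
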